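/- If a finite simple graph G is positive, then for every odd natural number k, the number of vertices of G having degree exactly k is even. -/

import Mathlib

open MeasureTheory

noncomputable section

/-- The unit interval `[0,1]` as a measure space. -/
abbrev UI : Type := Set.Icc (0:ℝ) 1

/-- A kernel is a symmetric bounded measurable function `[0,1]² → ℝ`. -/
def IsKernel (W : UI → UI → ℝ) : Prop :=
  Measurable (Function.uncurry W) ∧ (∀ x y, W x y = W y x) ∧ ∃ C : ℝ, ∀ x y, |W x y| ≤ C

open scoped Classical in
/-- The homomorphism density `t(G,W) = ∫_{[0,1]^V} ∏_{(a,b)∈E} W(p(a),p(b)) dp`. -/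
noncomputable def homDensity {V : Type} [Fintype V] (G : SimpleGraph V) (W : UI → UI → ℝ) : ℝ :=
  ∫ p : V → UI, ∏ e ∈ G.edgeFinset, W (p (Quot.out e).1) (p (Quot.out e).2)

/-- A graph is positive if `t(G,W) ≥ 0` for every kernel `W`. -/
def Positive {V : Type} [Fintype V] (G : SimpleGraph V) : Prop :=
  ∀ W : UI → UI → ℝ, IsKernel W → 0 ≤ homDensity G W

/-! ### Auxiliary constructions -/

/-- `cc k = 2^k`. -/
def cc (k : ℕ) : ℝ := 2 ^ (k : ℤ)
def DD (k : ℕ) : ℝ := 3 + cc k + (cc k)⁻¹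
def pp (k : ℕ) : ℝ := 3 / DD k
def qq (k : ℕ) : ℝ := cc k / DD k
def rr (k : ℕ) : ℝ := (cc k)⁻¹ / DD k
/-- A step function on `[0,1]` with values `-1`, `1/2`, `2`. -/
def FF (k : ℕ) (x : ℝ) : ℝ := if x < pp k then -1 else if x < pp k + qq k then 1/2 else 2
/-- The `j`-th moment of `FF k`. -/
def mom (k j : ℕ) : ℝ := pp k * (-1)^j + qq k * (1/2)^j + rr k * 2^j

lemma cc_pos (k : ℕ) : 0 < cc k := zpow_pos (by norm_num) _
lemma DD_pos (k : ℕ) : 0 < DD k := by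
  have h := cc_pos k
  have : 0 < (cc k)⁻¹ := inv_pos.2 h
  unfold DD; linarith
lemma pp_pos (k : ℕ) : 0 < pp k := div_pos (by norm_num) (DD_pos k)
lemma qq_pos (k : ℕ) : 0 < qq k := div_pos (cc_pos k) (DD_pos k)
lemma rr_pos (k : ℕ) : 0 < rr k := div_pos (inv_pos.2 (cc_pos k)) (DD_pos k)
lemma sum_eq_one (k : ℕ) : pp k + qq k + rr k = 1 := by
  have h2 : pp k + qq k + rr k = (3 + cc k + (cc k)⁻¹) / DD k := by
    unfold pp qq rr; ring
  rw [h2, show 3 + cc k + (cc k)⁻¹ = DD k from rfl]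
  exact div_self (DD_pos k).ne'

lemma measurable_FF (k : ℕ) : Measurable (FF k) := by
  unfold FF
  exact Measurable.ite measurableSet_Iio measurable_const
    (Measurable.ite measurableSet_Iio measurable_const measurable_const)

lemma abs_FF_le (k : ℕ) (x : ℝ) : |FF k x| ≤ 2 := by
  unfold FF; split_ifs <;> norm_num [abs_le]

lemma half_pow (k j : ℕ) : qq k * (1/2)^j = 2^((k:ℤ)-(j:ℤ)) / DD k := by
  unfold qq cc
  rw [one_div, inv_pow, ← zpow_natCast (2:ℝ) j, ← zpow_neg, div_mul_eq_mul_div,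
    ← zpow_add₀ (by norm_num : (2:ℝ) ≠ 0), sub_eq_add_neg]

lemma two_pow (k j : ℕ) : rr k * 2^j = 2^((j:ℤ)-(k:ℤ)) / DD k := by
  unfold rr cc
  rw [← zpow_natCast (2:ℝ) j, ← zpow_neg, div_mul_eq_mul_div,
    ← zpow_add₀ (by norm_num : (2:ℝ) ≠ 0), sub_eq_add_neg, add_comm]

lemma mom_neg (k : ℕ) (hk : Odd k) : mom k k < 0 := by
  have hD := DD_pos k
  have h : mom k k = -1 / DD k := by
    unfold mom
    rw [hk.neg_one_pow, half_pow, two_pow, sub_self]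
    unfold pp
    norm_num
    ring
  rw [h]
  exact div_neg_of_neg_of_pos (by norm_num) hD

lemma mom_pos (k j : ℕ) (hj : j ≠ k) (hk : Odd k) : 0 < mom k j := by
  have hD := DD_pos k
  have hp := pp_pos k; have hq := qq_pos k; have hr := rr_pos k
  rcases Nat.even_or_odd j with hje | hjo
  · have h1 : ((-1:ℝ))^j = 1 := hje.neg_one_pow
    have h2 := mul_pos hq (pow_pos (by norm_num : (0:ℝ) < 1/2) j)
    have h3 := mul_pos hr (pow_pos (by norm_num : (0:ℝ) < 2) j)
    unfold mom
    rw [h1]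
    linarith
  · have h1 : ((-1:ℝ))^j = -1 := hjo.neg_one_pow
    have hd0 : (j:ℤ) - (k:ℤ) ≠ 0 := sub_ne_zero.2 (by exact_mod_cast hj)
    have hde : Even ((j:ℤ) - (k:ℤ)) := by
      rw [Int.even_sub]
      simp [Int.even_coe_nat, Nat.not_even_iff_odd.2 hjo, Nat.not_even_iff_odd.2 hk]
    have key : (3:ℝ) < 2^((k:ℤ)-(j:ℤ)) + 2^((j:ℤ)-(k:ℤ)) := by
      set d : ℤ := (j:ℤ) - (k:ℤ) with hd
      have hkd : (k:ℤ) - (j:ℤ) = -d := by omega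
      rw [hkd]
      have hpos1 : (0:ℝ) < 2 ^ (-d) := zpow_pos (by norm_num) _
      have hpos2 : (0:ℝ) < 2 ^ d := zpow_pos (by norm_num) _
      obtain ⟨m, hm⟩ := hde
      rcases lt_or_gt_of_ne hd0 with hlt | hgt
      · have h2 : -d ≥ 2 := by omega
        have : (2:ℝ)^(2:ℤ) ≤ 2^(-d) := zpow_le_zpow_right₀ (by norm_num) h2
        have h4 : (4:ℝ) ≤ 2^(-d) := by norm_num at this ⊢; linarith
        linarith
      · have h2 : d ≥ 2 := by omega
        have : (2:ℝ)^(2:ℤ) ≤ 2^d := zpow_le_zpow_right₀ (by norm_num) h2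
        have h4 : (4:ℝ) ≤ 2^d := by norm_num at this ⊢; linarith
        linarith
    have hm : mom k j = (2^((k:ℤ)-(j:ℤ)) + 2^((j:ℤ)-(k:ℤ)) - 3) / DD k := by
      unfold mom
      rw [h1, half_pow, two_pow]
      unfold pp
      ring
    rw [hm]
    exact div_pos (by linarith) hD

lemma integral_FF (k j : ℕ) : ∫ x : UI, FF k (↑x) ^ j = mom k j := by
  have h1 : (∫ x : UI, FF k (↑x) ^ j) = ∫ x in Set.Icc (0:ℝ) 1, FF k x ^ j := by
    exact integral_subtype_comap measurableSet_Icc fun x => FF k x ^ j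
  have hp := pp_pos k; have hq := qq_pos k; have hr := rr_pos k
  have hsum := sum_eq_one k
  have hpq1 : pp k + qq k ≤ 1 := by linarith
  have hIntCo : IntegrableOn (fun x => FF k x ^ j) (Set.Ico 0 (pp k)) volume := by
    refine (IntegrableOn.congr_fun ((integrableOn_const_iff (C := ((-1:ℝ))^j)).2 (Or.inr ?_)) ?_ measurableSet_Ico)
    · rw [Real.volume_Ico]; exact ENNReal.ofReal_lt_top
    · intro x hx
      simp only [FF, if_pos hx.2]
  have hIntCo2 : IntegrableOn (fun x => FF k x ^ j) (Set.Ico (pp k) (pp k + qq k)) volume := by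
    refine (IntegrableOn.congr_fun ((integrableOn_const_iff (C := ((1/2:ℝ))^j)).2 (Or.inr ?_)) ?_ measurableSet_Ico)
    · rw [Real.volume_Ico]; exact ENNReal.ofReal_lt_top
    · intro x hx
      simp only [FF, if_neg (not_lt.2 hx.1), if_pos hx.2]
  have hIntCc : IntegrableOn (fun x => FF k x ^ j) (Set.Icc (pp k + qq k) 1) volume := by
    refine (IntegrableOn.congr_fun ((integrableOn_const_iff (C := ((2:ℝ))^j)).2 (Or.inr ?_)) ?_ measurableSet_Icc)
    · rw [Real.volume_Icc]; exact ENNReal.ofReal_lt_top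
    · intro x hx
      simp only [FF, if_neg (not_lt.2 (show pp k ≤ x by linarith [hx.1])), if_neg (not_lt.2 hx.1)]
  have hset : Set.Ico (0:ℝ) (pp k) ∪ (Set.Ico (pp k) (pp k + qq k) ∪ Set.Icc (pp k + qq k) 1) = Set.Icc 0 1 := by
    rw [Set.Ico_union_Icc_eq_Icc (by linarith) (by linarith)]
    rw [Set.Ico_union_Icc_eq_Icc (by linarith) (by linarith)]
  have hdisj1 : Disjoint (Set.Ico (0:ℝ) (pp k)) (Set.Ico (pp k) (pp k + qq k) ∪ Set.Icc (pp k + qq k) 1) := by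
    refine Set.disjoint_left.2 fun x hx hx' => ?_
    rcases hx' with h' | h'
    · exact absurd hx.2 (not_lt.2 h'.1)
    · exact absurd hx.2 (not_lt.2 (le_trans (by linarith) h'.1))
  have hdisj2 : Disjoint (Set.Ico (pp k) (pp k + qq k)) (Set.Icc (pp k + qq k) 1) :=
    Set.disjoint_left.2 fun x hx hx' => absurd hx.2 (not_lt.2 hx'.1)
  have hms : MeasurableSet (Set.Ico (pp k) (pp k + qq k) ∪ Set.Icc (pp k + qq k) 1) :=
    measurableSet_Ico.union measurableSet_Icc
  have i1 : ∫ x in Set.Ico (0:ℝ) (pp k), FF k x ^ j = pp k * (-1)^j := by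
    rw [setIntegral_congr_fun measurableSet_Ico (g := fun _ => ((-1:ℝ))^j)
        (fun x hx => by simp only [FF, if_pos hx.2]),
      setIntegral_const, Real.volume_real_Ico, sub_zero, max_eq_left hp.le, smul_eq_mul]
  have i2 : ∫ x in Set.Ico (pp k) (pp k + qq k), FF k x ^ j = qq k * (1/2)^j := by
    rw [setIntegral_congr_fun measurableSet_Ico (g := fun _ => ((1/2:ℝ))^j)
        (fun x hx => by simp only [FF, if_neg (not_lt.2 hx.1), if_pos hx.2]),
      setIntegral_const, Real.volume_real_Ico,
      show pp k + qq k - pp k = qq k by ring, max_eq_left hq.le, smul_eq_mul]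
  have i3 : ∫ x in Set.Icc (pp k + qq k) 1, FF k x ^ j = rr k * 2^j := by
    rw [setIntegral_congr_fun measurableSet_Icc (g := fun _ => ((2:ℝ))^j)
        (fun x hx => by
          simp only [FF, if_neg (not_lt.2 (show pp k ≤ x by linarith [hx.1])),
            if_neg (not_lt.2 hx.1)]),
      setIntegral_const, Real.volume_real_Icc,
      show (1:ℝ) - (pp k + qq k) = rr k by linarith, max_eq_left hr.le, smul_eq_mul]
  rw [h1, ← hset, setIntegral_union hdisj1 hms hIntCo (hIntCo2.union hIntCc),
      setIntegral_union hdisj2 measurableSet_Icc hIntCo2 hIntCc, i1, i2, i3]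
  unfold mom
  ring

open Finset in
open scoped Classical in
lemma prod_edge {V : Type} [Fintype V] (G : SimpleGraph V) (g : V → ℝ) :
    ∏ e ∈ G.edgeFinset, g (Quot.out e).1 * g (Quot.out e).2 = ∏ v, g v ^ G.degree v := by
  have key : ∀ e ∈ G.edgeFinset, g (Quot.out e).1 * g (Quot.out e).2
      = ∏ v, g v ^ ((if v = (Quot.out e).1 then 1 else 0) + (if v = (Quot.out e).2 then 1 else 0)) := by
    intro e he
    simp only [pow_add]
    rw [Finset.prod_mul_distrib]
    congr 1
    · rw [show (∏ v, g v ^ (if v = (Quot.out e).1 then 1 else 0))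
          = ∏ v, (if v = (Quot.out e).1 then g v else 1) from
        Finset.prod_congr rfl (by intro v _; split <;> simp)]
      simp
    · rw [show (∏ v, g v ^ (if v = (Quot.out e).2 then 1 else 0))
          = ∏ v, (if v = (Quot.out e).2 then g v else 1) from
        Finset.prod_congr rfl (by intro v _; split <;> simp)]
      simp
  rw [Finset.prod_congr rfl key, Finset.prod_comm]
  refine Finset.prod_congr rfl fun v _ => ?_
  rw [Finset.prod_pow_eq_pow_sum]
  congr 1
  rw [← SimpleGraph.card_incidenceFinset_eq_degree, SimpleGraph.incidenceFinset_eq_filter]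
  rw [Finset.card_filter]
  refine Finset.sum_congr rfl fun e he => ?_
  have hout : s((Quot.out e).1, (Quot.out e).2) = e := by
    rw [Sym2.mk]
    exact Quot.out_eq e
  have hne : (Quot.out e).1 ≠ (Quot.out e).2 := by
    intro hEq
    apply G.not_isDiag_of_mem_edgeFinset he
    rw [← hout, Sym2.mk_isDiag_iff]
    exact hEq
  have hmem : (v ∈ e) ↔ (v = (Quot.out e).1 ∨ v = (Quot.out e).2) := by
    conv_lhs => rw [← hout]
    exact Sym2.mem_iff
  by_cases h1 : v = (Quot.out e).1 <;> by_cases h2 : v = (Quot.out e).2 <;>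
    simp_all

open scoped Classical in
/-- If `G` is positive, then for every odd `k` the number of vertices of degree `k` is
even. -/
theorem positive_even_count_odd_degree {V : Type} [Fintype V] (G : SimpleGraph V)
    (h : Positive G) (k : ℕ) (hk : Odd k) :
    Even (Finset.univ.filter (fun v : V => G.degree v = k)).card := by
  by_contra hodd
  have hoddc : Odd (Finset.univ.filter (fun v : V => G.degree v = k)).card :=
    Nat.not_even_iff_odd.1 hodd
  set W : UI → UI → ℝ := fun x y => FF k ↑x * FF k ↑y with hW
  have hker : IsKernel W := by
    refine ⟨?_, fun x y => mul_comm _ _, ⟨4, fun x y => ?_⟩⟩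
    · exact ((measurable_FF k).comp (measurable_subtype_coe.comp measurable_fst)).mul
        ((measurable_FF k).comp (measurable_subtype_coe.comp measurable_snd))
    · calc |W x y| = |FF k ↑x| * |FF k ↑y| := abs_mul _ _
        _ ≤ 2 * 2 := mul_le_mul (abs_FF_le k _) (abs_FF_le k _) (abs_nonneg _) (by norm_num)
        _ = 4 := by norm_num
  have hdens : homDensity G W = ∏ v, mom k (G.degree v) := by
    unfold homDensity
    have hstep : (fun p : V → UI => ∏ e ∈ G.edgeFinset, W (p (Quot.out e).1) (p (Quot.out e).2))
        = fun p : V → UI => ∏ v, FF k ((p v : ℝ)) ^ G.degree v := by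
      funext p
      exact prod_edge G (fun v => FF k ((p v : ℝ)))
    rw [hstep]
    rw [MeasureTheory.integral_fintype_prod_volume_eq_prod (fun v (x : UI) => FF k (x : ℝ) ^ G.degree v)]
    exact Finset.prod_congr rfl fun v _ => integral_FF k (G.degree v)
  have hprod : homDensity G W < 0 := by
    rw [hdens, ← Finset.prod_filter_mul_prod_filter_not Finset.univ
      (fun v : V => G.degree v = k) (fun v => mom k (G.degree v))]
    have hA : ∏ v ∈ Finset.univ.filter (fun v : V => G.degree v = k), mom k (G.degree v)
        = (mom k k) ^ (Finset.univ.filter (fun v : V => G.degree v = k)).card := by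
      rw [Finset.prod_congr rfl (fun v hv => by
        rw [(Finset.mem_filter.1 hv).2]), Finset.prod_const]
    have hB : 0 < ∏ v ∈ Finset.univ.filter (fun v : V => ¬ G.degree v = k), mom k (G.degree v) :=
      Finset.prod_pos fun v hv => mom_pos k (G.degree v) (Finset.mem_filter.1 hv).2 hk
    have hAneg : (mom k k) ^ (Finset.univ.filter (fun v : V => G.degree v = k)).card < 0 :=
      hoddc.pow_neg (mom_neg k hk)
    rw [hA]
    exact mul_neg_of_neg_of_pos hAneg hB
  exact absurd (h W hker) (not_le.2 hprod)

end
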